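/- The sequence (Σ_{λ ⊢ n} z_λ)/n! tends to 1 as n → ∞, where z_λ = Π_i i^{m_i} m_i! with m_i the number of parts of λ equal to i. In particular, the sum Σ_{λ ⊢ n} z_λ is asymptotic to n!, being dominated by the single term z_{(1^n)} = n!. -/

import Mathlib

open MvPolynomial

namespace TensorMatrix

/-- The `j`-th part (0-indexed, in weakly decreasing order) of a partition of `n`;
defined to be `0` beyond the number of parts. -/
def part {n : ℕ} (μ : n.Partition) (j : ℕ) : ℕ :=
  ((μ.parts.sort (· ≤ ·)).reverse).getD j 0

/-- The number of parts (rows) of a partition. -/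
def numRows {n : ℕ} (μ : n.Partition) : ℕ := Multiset.card μ.parts

/-- Auxiliary counting lemma: summing, over `j < n`, the number of parts exceeding `j`
recovers the total number of boxes. -/
theorem sum_card_filter_lt (n : ℕ) (s : Multiset ℕ) (hs : ∀ p ∈ s, p ≤ n) :
    (∑ j ∈ Finset.range n, Multiset.card (s.filter (fun p => j < p))) = s.sum := by
  induction s using Multiset.induction with
  | empty => simp
  | cons a s ih =>
    have ha : a ≤ n := hs a (Multiset.mem_cons_self a s)
    have ih' := ih (fun p hp => hs p (Multiset.mem_cons_of_mem hp))
    have hstep : ∀ j : ℕ, Multiset.card ((a ::ₘ s).filter (fun p => j < p))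
        = Multiset.card (s.filter (fun p => j < p)) + (if j < a then 1 else 0) := by
      intro j
      by_cases h : j < a <;> simp [Multiset.filter_cons, h, add_comm]
    rw [Finset.sum_congr rfl (fun j _ => hstep j), Finset.sum_add_distrib, ih']
    have : (∑ j ∈ Finset.range n, if j < a then 1 else 0) = a := by
      have h1 : (Finset.range n).filter (fun j => j < a) = Finset.range a := by
        ext j
        simp only [Finset.mem_filter, Finset.mem_range]
        omega
      rw [Finset.sum_boole, h1]
      simp
    rw [this, Multiset.sum_cons]
    omega

/-- The conjugate (transposed) partition. -/
def conj {n : ℕ} (μ : n.Partition) : n.Partition :=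
  Nat.Partition.ofSums n
    ((Multiset.range n).map fun j => Multiset.card (μ.parts.filter (fun p => j < p)))
    (by
      have hle : ∀ p ∈ μ.parts, p ≤ n := by
        intro p hp
        have := μ.parts_sum
        calc p ≤ μ.parts.sum := Multiset.single_le_sum (fun x _ => Nat.zero_le x) p hp
        _ = n := μ.parts_sum
      calc ((Multiset.range n).map fun j =>
              Multiset.card (μ.parts.filter (fun p => j < p))).sum
          = ∑ j ∈ Finset.range n, Multiset.card (μ.parts.filter (fun p => j < p)) := by
            rw [Finset.sum_eq_multiset_sum]; rfl
        _ = μ.parts.sum := sum_card_filter_lt n μ.parts hle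
        _ = n := μ.parts_sum)

/-- Power sum polynomial `p_m = ∑ᵢ xᵢ^m` in `N` variables. -/
noncomputable def pSum (N m : ℕ) : MvPolynomial (Fin N) ℤ :=
  ∑ i : Fin N, X i ^ m

/-- The Vandermonde product `∏_{i<j} (xᵢ - xⱼ)` in `N` variables. -/
noncomputable def vander (N : ℕ) : MvPolynomial (Fin N) ℤ :=
  ∏ p ∈ Finset.univ.filter (fun p : Fin N × Fin N => p.1 < p.2), (X p.1 - X p.2)

/-- The value `χ_λ(σ)` of the irreducible character of the symmetric group `S_n`
labelled by the partition `λ ⊢ n`, on a permutation whose cycle type is `ct`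
(cycles of length `≥ 2`; missing entries are fixed points).  This is the Frobenius
character formula: `χ_λ(σ)` is the coefficient of `x^(λ_j + n - 1 - j)` in
`∏_{i<j}(xᵢ-xⱼ) · ∏_c p_c`, the product running over the full cycle type of `σ`. -/
noncomputable def chiCT {n : ℕ} (lam : n.Partition) (ct : Multiset ℕ) : ℤ :=
  MvPolynomial.coeff
    (Finsupp.equivFunOnFinite.symm fun j : Fin n => part lam j + (n - 1 - (j : ℕ)))
    (vander n * (ct.map (pSum n)).prod * (pSum n 1) ^ (n - ct.sum))

/-- The irreducible character of `S_n` labelled by the partition `λ ⊢ n`. -/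
noncomputable def chi {n : ℕ} (lam : n.Partition) (σ : Equiv.Perm (Fin n)) : ℤ :=
  chiCT lam σ.cycleType

/-- The multi-Kronecker coefficient
`g_{μ₁,…,μ_k} = (1/n!) ∑_{σ ∈ S_n} χ_{μ₁}(σ) ⋯ χ_{μ_k}(σ)`. -/
noncomputable def kronList {n : ℕ} (L : List n.Partition) : ℚ :=
  (n.factorial : ℚ)⁻¹ *
    ∑ σ : Equiv.Perm (Fin n), (L.map fun μ => (chi μ σ : ℚ)).prod

/-- The Kronecker coefficient `g_{μνλ} = (1/n!) ∑_{σ ∈ S_n} χ_μ(σ) χ_ν(σ) χ_λ(σ)`. -/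
noncomputable def kron3 {n : ℕ} (μ ν lam : n.Partition) : ℚ := kronList [μ, ν, lam]

/-- The Littlewood–Richardson coefficient `c^λ_{μν} = ⟨s_λ, s_μ s_ν⟩` for `μ ⊢ a`,
`ν ⊢ b`, `λ ⊢ a + b`, expressed via Frobenius reciprocity as the inner product
`⟨Res^{S_{a+b}}_{S_a × S_b} χ_λ, χ_μ × χ_ν⟩`. -/
noncomputable def lr {n a b : ℕ} (lam : n.Partition) (μ : a.Partition) (ν : b.Partition) : ℚ :=
  ((a.factorial : ℚ) * (b.factorial : ℚ))⁻¹ *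
    ∑ σ : Equiv.Perm (Fin a), ∑ τ : Equiv.Perm (Fin b),
      (chi μ σ : ℚ) * (chi ν τ : ℚ) * (chiCT lam (σ.cycleType + τ.cycleType) : ℚ)

/-- The hook partition `μ(r) = (n-r, 1^r)` of `n`. -/
def hook (n r : ℕ) (h : r < n) : n.Partition where
  parts := (n - r) ::ₘ Multiset.replicate r 1
  parts_pos := by
    intro i hi
    rcases Multiset.mem_cons.mp hi with h1 | h1
    · omega
    · rw [Multiset.eq_of_mem_replicate h1]; norm_num
  parts_sum := by
    rw [Multiset.sum_cons, Multiset.sum_replicate, smul_eq_mul]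
    omega

/-- The one-column partition `(1^n)` of `n`. -/
def onesPart (n : ℕ) : n.Partition where
  parts := Multiset.replicate n 1
  parts_pos := by
    intro i hi
    rw [Multiset.eq_of_mem_replicate hi]; norm_num
  parts_sum := by simp

/-- The number of (removable) corners of a partition: the number of distinct part sizes. -/
def corners {n : ℕ} (μ : n.Partition) : ℕ := μ.parts.toFinset.card

/-- `|ν ∩ λ| = ∑ᵢ min(νᵢ, λᵢ)`, the number of boxes in the intersection of the
Young diagrams of `ν` and `λ`. -/
def interSize {n : ℕ} (ν lam : n.Partition) : ℕ :=
  ∑ j ∈ Finset.range n, min (part ν j) (part lam j)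

/-- The number of (positive) parts of the intersection `ν ∩ λ`. -/
def interLen {n : ℕ} (ν lam : n.Partition) : ℕ := min (numRows ν) (numRows lam)

/-- The smallest part `(ν∩λ)_{ℓ(ν∩λ)}` of the intersection partition `ν ∩ λ`. -/
def interMinPart {n : ℕ} (ν lam : n.Partition) : ℕ :=
  min (part ν (interLen ν lam - 1)) (part lam (interLen ν lam - 1))

/-- The smallest part `ρ_{ℓ(ρ)}` of a partition `ρ`. -/
def minPart {n : ℕ} (ρ : n.Partition) : ℕ := part ρ (numRows ρ - 1)

/-- `z_λ = ∏ᵢ i^{mᵢ} mᵢ!`, where `mᵢ` is the number of parts of `λ` equal to `i`: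
the order of the centralizer in `S_n` of a permutation of cycle type `λ`. -/
def zpart {n : ℕ} (lam : n.Partition) : ℕ :=
  ∏ i ∈ Finset.range (n + 1), i ^ (lam.parts.count i) * (lam.parts.count i).factorial

theorem aux_zpart_onesPart (n : ℕ) : zpart (onesPart n) = n.factorial := by
  unfold zpart onesPart
  rcases Nat.eq_zero_or_pos n with h | h
  · subst h; simp
  · rw [Finset.prod_eq_single 1]
    · simp [Multiset.count_replicate]
    · intro i _ hne
      simp [Multiset.count_replicate, Ne.symm hne]
    · intro h1; exact absurd (Finset.mem_range.mpr (by omega)) h1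

theorem aux_sum_mul_count {n : ℕ} (lam : n.Partition) :
    ∑ i ∈ Finset.range (n + 1), i * lam.parts.count i = n := by
  have key : ∀ (s : Multiset ℕ) (N : ℕ), (∀ p ∈ s, p < N) →
      ∑ i ∈ Finset.range N, i * s.count i = s.sum := by
    intro s
    induction s using Multiset.induction with
    | empty => simp
    | cons a s ih =>
      intro N hN
      have ha : a < N := hN a (Multiset.mem_cons_self a s)
      have ih' := ih N (fun p hp => hN p (Multiset.mem_cons_of_mem hp))
      have hc : ∀ i, (a ::ₘ s).count i = s.count i + if i = a then 1 else 0 := by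
        intro i
        by_cases h : i = a <;> simp [Multiset.count_cons, h]
      calc ∑ i ∈ Finset.range N, i * (a ::ₘ s).count i
          = ∑ i ∈ Finset.range N, (i * s.count i + i * (if i = a then 1 else 0)) := by
            refine Finset.sum_congr rfl fun i _ => ?_
            rw [hc, Nat.mul_add]
        _ = s.sum + ∑ i ∈ Finset.range N, i * (if i = a then 1 else 0) := by
            rw [Finset.sum_add_distrib, ih']
        _ = s.sum + a := by
            congr 1
            rw [Finset.sum_eq_single a]
            · simp
            · intro b _ hb; simp [hb]
            · intro hcon; exact absurd (Finset.mem_range.mpr ha) hcon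
        _ = (a ::ₘ s).sum := by rw [Multiset.sum_cons]; omega
  rw [key lam.parts (n+1) (fun p hp => ?_), lam.parts_sum]
  have h1 : p ≤ lam.parts.sum :=
    Multiset.single_le_sum (fun x _ => Nat.zero_le x) p hp
  rw [lam.parts_sum] at h1
  omega

theorem aux_range_split (n : ℕ) (hn : 1 ≤ n) :
    Finset.range (n + 1) = insert 0 (insert 1 (Finset.Icc 2 n)) := by
  ext i
  simp only [Finset.mem_range, Finset.mem_insert, Finset.mem_Icc]
  omega

theorem aux_count_zero {n : ℕ} (lam : n.Partition) : lam.parts.count 0 = 0 := by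
  rw [Multiset.count_eq_zero]
  intro h
  exact absurd (lam.parts_pos h) (by norm_num)

theorem aux_icc_sum_mul_count {n : ℕ} (lam : n.Partition) (hn : 1 ≤ n) :
    ∑ i ∈ Finset.Icc 2 n, i * lam.parts.count i = n - lam.parts.count 1 ∧
      lam.parts.count 1 ≤ n := by
  have h := aux_sum_mul_count lam
  rw [aux_range_split n hn] at h
  rw [Finset.sum_insert (by simp), Finset.sum_insert (by simp)] at h
  simp only [Nat.zero_mul, Nat.one_mul, Nat.zero_add] at h
  omega

theorem aux_zpart_le {n : ℕ} (lam : n.Partition) (hn : 1 ≤ n) :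
    zpart lam ≤ (lam.parts.count 1).factorial * 2 ^ (n - lam.parts.count 1) *
      ((n - lam.parts.count 1) / 2).factorial := by
  obtain ⟨hsum, hm1⟩ := aux_icc_sum_mul_count lam hn
  set m : ℕ → ℕ := fun i => lam.parts.count i with hm
  set s := n - lam.parts.count 1 with hs
  have hz : zpart lam = (m 1).factorial * ∏ i ∈ Finset.Icc 2 n, i ^ m i * (m i).factorial := by
    unfold zpart
    rw [aux_range_split n hn, Finset.prod_insert (by simp), Finset.prod_insert (by simp)]
    simp [aux_count_zero lam, hm]
  rw [hz]
  have hsplit : ∏ i ∈ Finset.Icc 2 n, i ^ m i * (m i).factorial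
      = (∏ i ∈ Finset.Icc 2 n, i ^ m i) * ∏ i ∈ Finset.Icc 2 n, (m i).factorial :=
    Finset.prod_mul_distrib
  have hpow : (∏ i ∈ Finset.Icc 2 n, i ^ m i) ≤ 2 ^ s := by
    calc (∏ i ∈ Finset.Icc 2 n, i ^ m i)
        ≤ ∏ i ∈ Finset.Icc 2 n, 2 ^ (i * m i) := by
          refine Finset.prod_le_prod (fun _ _ => Nat.zero_le _) (fun i _ => ?_)
          rw [pow_mul]
          exact Nat.pow_le_pow_left (Nat.le_of_lt (Nat.lt_two_pow_self (n := i))) _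
      _ = 2 ^ (∑ i ∈ Finset.Icc 2 n, i * m i) := by
          rw [← Finset.prod_pow_eq_pow_sum]
      _ = 2 ^ s := by rw [hsum]
  have hfact : (∏ i ∈ Finset.Icc 2 n, (m i).factorial) ≤ (s / 2).factorial := by
    have h1 : (∏ i ∈ Finset.Icc 2 n, (m i).factorial)
        ≤ (∑ i ∈ Finset.Icc 2 n, m i).factorial :=
      Nat.le_of_dvd (Nat.factorial_pos _) (Nat.prod_factorial_dvd_factorial_sum _ _)
    refine h1.trans (Nat.factorial_le ?_)
    have h2 : 2 * ∑ i ∈ Finset.Icc 2 n, m i ≤ ∑ i ∈ Finset.Icc 2 n, i * m i := by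
      rw [Finset.mul_sum]
      refine Finset.sum_le_sum fun i hi => ?_
      exact Nat.mul_le_mul_right _ (Finset.mem_Icc.mp hi).1
    rw [hsum] at h2
    omega
  calc (m 1).factorial * ∏ i ∈ Finset.Icc 2 n, i ^ m i * (m i).factorial
      = (m 1).factorial * ((∏ i ∈ Finset.Icc 2 n, i ^ m i) *
          ∏ i ∈ Finset.Icc 2 n, (m i).factorial) := by rw [hsplit]
    _ ≤ (m 1).factorial * (2 ^ s * (s / 2).factorial) :=
        Nat.mul_le_mul_left _ (Nat.mul_le_mul hpow hfact)
    _ = (m 1).factorial * 2 ^ s * (s / 2).factorial := by ring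

theorem aux_two_le_s {n : ℕ} (lam : n.Partition) (hne : lam ≠ onesPart n) :
    2 ≤ n - lam.parts.count 1 := by
  by_cases hall : ∀ p ∈ lam.parts, p = 1
  · exfalso
    apply hne
    have hrep : lam.parts = Multiset.replicate (Multiset.card lam.parts) 1 :=
      Multiset.eq_replicate_card.mpr hall
    have hps := lam.parts_sum
    rw [hrep, Multiset.sum_replicate, smul_eq_mul, Nat.mul_one] at hps
    have hp : lam.parts = Multiset.replicate n 1 := by rw [hrep, hps]
    exact Nat.Partition.ext hp
  · push_neg at hall
    obtain ⟨p, hp, hp1⟩ := hall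
    have hp2 : 2 ≤ p := by
      have := lam.parts_pos hp
      omega
    have hpn : p ≤ n := by
      have h1 : p ≤ lam.parts.sum :=
        Multiset.single_le_sum (fun x _ => Nat.zero_le x) p hp
      rwa [lam.parts_sum] at h1
    have hn1 : 1 ≤ n := by omega
    obtain ⟨hsum, hm1⟩ := aux_icc_sum_mul_count lam hn1
    have hterm : p * lam.parts.count p ≤ ∑ i ∈ Finset.Icc 2 n, i * lam.parts.count i :=
      Finset.single_le_sum (f := fun i => i * lam.parts.count i)
        (fun _ _ => Nat.zero_le _) (Finset.mem_Icc.mpr ⟨hp2, hpn⟩)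
    have hcp : 1 ≤ lam.parts.count p := Multiset.one_le_count_iff_mem.mpr hp
    have : 2 ≤ p * lam.parts.count p := by
      calc 2 ≤ p * 1 := by omega
        _ ≤ p * lam.parts.count p := Nat.mul_le_mul_left _ hcp
    omega

theorem aux_filter_not_eq {n : ℕ} (lam : n.Partition) :
    lam.parts.filter (fun p => ¬ 2 ≤ p) = Multiset.replicate (lam.parts.count 1) 1 := by
  rw [Multiset.filter_congr (q := fun p => p = 1) (fun x hx => by
    have := lam.parts_pos hx; constructor <;> intro <;> omega)]
  exact Multiset.filter_eq' lam.parts 1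

theorem aux_count_one_le {n : ℕ} (lam : n.Partition) : lam.parts.count 1 ≤ n := by
  have h := congrArg Multiset.sum (Multiset.filter_add_not (fun p => 2 ≤ p) lam.parts)
  rw [Multiset.sum_add, aux_filter_not_eq, Multiset.sum_replicate, smul_eq_mul, Nat.mul_one,
    lam.parts_sum] at h
  omega

theorem aux_filter_sum_eq {n : ℕ} (lam : n.Partition) :
    (lam.parts.filter (fun p => 2 ≤ p)).sum = n - lam.parts.count 1 := by
  have h := congrArg Multiset.sum (Multiset.filter_add_not (fun p => 2 ≤ p) lam.parts)
  rw [Multiset.sum_add, aux_filter_not_eq, Multiset.sum_replicate, smul_eq_mul, Nat.mul_one,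
    lam.parts_sum] at h
  omega

/-- the non-1 parts of a partition, as a composition -/

def auxToComp {n : ℕ} (lam : n.Partition) : Composition (n - lam.parts.count 1) where
  blocks := (lam.parts.filter (fun p => 2 ≤ p)).sort (· ≤ ·)
  blocks_pos := by
    intro i hi
    rw [Multiset.mem_sort] at hi
    have := Multiset.of_mem_filter hi
    omega
  blocks_sum := by
    have h := congrArg Multiset.sum
      (Multiset.sort_eq (lam.parts.filter (fun p => 2 ≤ p)) (· ≤ ·))
    rw [Multiset.sum_coe] at h
    rw [h]
    exact aux_filter_sum_eq lam

theorem aux_toComp_inj {n : ℕ} (lam mu : n.Partition)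
    (hc : lam.parts.count 1 = mu.parts.count 1)
    (h : (auxToComp lam).blocks = (auxToComp mu).blocks) : lam = mu := by
  apply Nat.Partition.ext
  have h2 : lam.parts.filter (fun p => 2 ≤ p) = mu.parts.filter (fun p => 2 ≤ p) := by
    have h3 := congrArg (fun l : List ℕ => (l : Multiset ℕ)) h
    simpa only [auxToComp, Multiset.sort_eq] using h3
  have hl := Multiset.filter_add_not (fun p => 2 ≤ p) lam.parts
  have hm := Multiset.filter_add_not (fun p => 2 ≤ p) mu.parts
  rw [← hl, ← hm, aux_filter_not_eq, aux_filter_not_eq, h2, hc]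

theorem aux_fiber_card_le (n s : ℕ) :
    (((Finset.univ : Finset n.Partition).erase (onesPart n)).filter
      (fun lam => n - lam.parts.count 1 = s)).card ≤ 2 ^ s := by
  set F := (((Finset.univ : Finset n.Partition).erase (onesPart n)).filter
      (fun lam => n - lam.parts.count 1 = s))
  have hmaps : ∀ lam ∈ F, ((lam.parts.filter (fun p => 2 ≤ p)).sort (· ≤ ·) : List ℕ)
      ∈ (Finset.univ : Finset (Composition s)).image Composition.blocks := by
    intro lam hlam
    have hgs : n - lam.parts.count 1 = s := (Finset.mem_filter.mp hlam).2
    refine Finset.mem_image.mpr ⟨⟨(lam.parts.filter (fun p => 2 ≤ p)).sort (· ≤ ·), ?_, ?_⟩,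
      Finset.mem_univ _, rfl⟩
    · intro i hi
      rw [Multiset.mem_sort] at hi
      have := Multiset.of_mem_filter hi
      omega
    · have h := congrArg Multiset.sum
        (Multiset.sort_eq (lam.parts.filter (fun p => 2 ≤ p)) (· ≤ ·))
      rw [Multiset.sum_coe] at h
      rw [h, aux_filter_sum_eq lam, hgs]
  have hinj : Set.InjOn (fun lam : n.Partition =>
      ((lam.parts.filter (fun p => 2 ≤ p)).sort (· ≤ ·) : List ℕ)) F := by
    intro lam hlam mu hmu heq
    have h1 : n - lam.parts.count 1 = s := (Finset.mem_filter.mp hlam).2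
    have h2 : n - mu.parts.count 1 = s := (Finset.mem_filter.mp hmu).2
    have hc : lam.parts.count 1 = mu.parts.count 1 := by
      have := aux_count_one_le lam
      have := aux_count_one_le mu
      -- not derivable by omega alone! n - a = n - b with a,b ≤ n gives a = b
      omega
    exact aux_toComp_inj lam mu hc heq
  calc F.card ≤ ((Finset.univ : Finset (Composition s)).image Composition.blocks).card :=
        Finset.card_le_card_of_injOn _ hmaps hinj
    _ ≤ (Finset.univ : Finset (Composition s)).card := Finset.card_image_le
    _ = 2 ^ (s - 1) := by rw [Finset.card_univ, composition_card]
    _ ≤ 2 ^ s := Nat.pow_le_pow_right (by norm_num) (Nat.sub_le _ _)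

theorem aux_sum_zpart_le (n : ℕ) (hn : 1 ≤ n) :
    ∑ lam : n.Partition, zpart lam ≤ n.factorial +
      ∑ s ∈ Finset.Icc 2 n, 2 ^ s * ((n - s).factorial * 2 ^ s * (s / 2).factorial) := by
  rw [← Finset.add_sum_erase Finset.univ zpart (Finset.mem_univ (onesPart n)),
    aux_zpart_onesPart]
  refine Nat.add_le_add_left ?_ _
  set T := (Finset.univ : Finset n.Partition).erase (onesPart n)
  have hmaps : ∀ lam ∈ T, n - lam.parts.count 1 ∈ Finset.Icc 2 n := by
    intro lam hlam
    refine Finset.mem_Icc.mpr ⟨aux_two_le_s lam (Finset.mem_erase.mp hlam).1, Nat.sub_le _ _⟩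
  rw [← Finset.sum_fiberwise_of_maps_to hmaps zpart]
  refine Finset.sum_le_sum fun s hs => ?_
  have hbound : ∀ lam ∈ T.filter (fun lam => n - lam.parts.count 1 = s),
      zpart lam ≤ (n - s).factorial * 2 ^ s * (s / 2).factorial := by
    intro lam hlam
    have hgs : n - lam.parts.count 1 = s := (Finset.mem_filter.mp hlam).2
    have hc1 : lam.parts.count 1 = n - s := by
      have := aux_count_one_le lam; omega
    have := aux_zpart_le lam hn
    rwa [hgs, hc1] at this
  calc ∑ lam ∈ T.filter (fun lam => n - lam.parts.count 1 = s), zpart lam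
      ≤ (T.filter (fun lam => n - lam.parts.count 1 = s)).card •
          ((n - s).factorial * 2 ^ s * (s / 2).factorial) :=
        Finset.sum_le_card_nsmul _ _ _ hbound
    _ = (T.filter (fun lam => n - lam.parts.count 1 = s)).card *
          ((n - s).factorial * 2 ^ s * (s / 2).factorial) := smul_eq_mul _ _
    _ ≤ 2 ^ s * ((n - s).factorial * 2 ^ s * (s / 2).factorial) :=
        Nat.mul_le_mul_right _ (aux_fiber_card_le n s)

theorem aux_term_bound (n s : ℕ) (hn : 64 ≤ n) (hs2 : 2 ≤ s) (hsn : s ≤ n) :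
    ((2 ^ s * ((n - s).factorial * 2 ^ s * (s / 2).factorial) : ℕ) : ℝ)
      ≤ 32 / n * (3 / 4) ^ (s - 2) * n.factorial := by
  set k := s - s / 2 with hk
  have hk1 : 1 ≤ k := by omega
  have hkn : k ≤ n := by omega
  have hs2k : s ≤ 2 * k := by omega
  have h2k : 2 * k ≤ s + 1 := by omega
  -- ℕ facts
  have hA : (s / 2).factorial * (n - s).factorial ≤ (n - k).factorial := by
    have hd := Nat.factorial_mul_factorial_dvd_factorial_add (s / 2) (n - s)
    have : s / 2 + (n - s) = n - k := by omega
    rw [this] at hd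
    exact Nat.le_of_dvd (Nat.factorial_pos _) hd
  have hB : (n - k).factorial * (n - k + 1) ^ k ≤ n.factorial := by
    have := Nat.factorial_mul_pow_le_factorial (m := n - k) (n := k)
    rwa [show n - k + k = n by omega] at this
  have hC : (n : ℝ) / 2 ≤ (n - k + 1 : ℕ) := by
    have : n ≤ 2 * (n - k + 1) := by omega
    have h' : (n : ℝ) ≤ 2 * ((n - k + 1 : ℕ) : ℝ) := by exact_mod_cast this
    linarith
  have hn0 : (0 : ℝ) < n := by positivity
  -- chain in ℝ
  have hfac : ((s / 2).factorial : ℝ) * (n - s).factorial * ((n : ℝ) / 2) ^ k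
      ≤ n.factorial := by
    calc ((s / 2).factorial : ℝ) * (n - s).factorial * ((n : ℝ) / 2) ^ k
        ≤ ((n - k).factorial : ℝ) * ((n - k + 1 : ℕ) : ℝ) ^ k := by
          apply mul_le_mul
          · exact_mod_cast hA
          · exact pow_le_pow_left₀ (by positivity) hC k
          · positivity
          · positivity
      _ ≤ (n.factorial : ℝ) := by exact_mod_cast hB
  have hcore : (4 : ℝ) ^ s ≤ 32 / n * (3 / 4) ^ (s - 2) * ((n : ℝ) / 2) ^ k := by
    have h1 : (4 : ℝ) ^ s ≤ 16 ^ k := by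
      calc (4 : ℝ) ^ s ≤ 4 ^ (2 * k) := by
            apply pow_le_pow_right₀ (by norm_num) hs2k
        _ = 16 ^ k := by rw [pow_mul]; norm_num
    have h2 : (16 : ℝ) ^ k = (32 / n) ^ k * ((n : ℝ) / 2) ^ k := by
      rw [← mul_pow]
      congr 1
      field_simp
      ring
    have h3 : ((32 : ℝ) / n) ^ k ≤ 32 / n * (3 / 4) ^ (s - 2) := by
      have hb : (32 : ℝ) / n ≤ 9 / 16 := by
        rw [div_le_div_iff₀ hn0 (by norm_num)]
        have : (64 : ℝ) ≤ n := by exact_mod_cast hn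
        linarith
      have hbn : (0 : ℝ) ≤ 32 / n := by positivity
      calc ((32 : ℝ) / n) ^ k = 32 / n * (32 / n) ^ (k - 1) := by
            rw [← pow_succ']
            congr 1
            omega
        _ ≤ 32 / n * (9 / 16) ^ (k - 1) := by
            apply mul_le_mul_of_nonneg_left _ hbn
            exact pow_le_pow_left₀ hbn hb _
        _ = 32 / n * (3 / 4) ^ (2 * (k - 1)) := by
            rw [pow_mul]
            norm_num
        _ ≤ 32 / n * (3 / 4) ^ (s - 2) := by
            apply mul_le_mul_of_nonneg_left _ hbn
            apply pow_le_pow_of_le_one (by norm_num) (by norm_num)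
            omega
    calc (4 : ℝ) ^ s ≤ 16 ^ k := h1
      _ = (32 / n) ^ k * ((n : ℝ) / 2) ^ k := h2
      _ ≤ 32 / n * (3 / 4) ^ (s - 2) * ((n : ℝ) / 2) ^ k := by
          apply mul_le_mul_of_nonneg_right h3 (by positivity)
  -- assemble
  push_cast
  have hLHS : (2 : ℝ) ^ s * ((n - s : ℕ).factorial * 2 ^ s * ((s / 2 : ℕ)).factorial)
      = 4 ^ s * (((s / 2 : ℕ)).factorial * ((n - s : ℕ)).factorial) := by
    rw [show (4 : ℝ) ^ s = 2 ^ s * 2 ^ s by rw [← mul_pow]; norm_num]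
    ring
  rw [hLHS]
  calc (4 : ℝ) ^ s * (((s / 2 : ℕ)).factorial * ((n - s : ℕ)).factorial)
      ≤ (32 / n * (3 / 4) ^ (s - 2) * ((n : ℝ) / 2) ^ k) *
          (((s / 2 : ℕ)).factorial * ((n - s : ℕ)).factorial) := by
        apply mul_le_mul_of_nonneg_right hcore (by positivity)
    _ = 32 / n * (3 / 4) ^ (s - 2) *
          (((s / 2 : ℕ)).factorial * ((n - s : ℕ)).factorial * ((n : ℝ) / 2) ^ k) := by ring
    _ ≤ 32 / n * (3 / 4) ^ (s - 2) * n.factorial := by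
        apply mul_le_mul_of_nonneg_left hfac (by positivity)

theorem aux_geom_bound (n : ℕ) : ∑ s ∈ Finset.Icc 2 n, ((3 : ℝ) / 4) ^ (s - 2) ≤ 4 := by
  rw [← Finset.Ico_add_one_right_eq_Icc, Finset.sum_Ico_eq_sum_range]
  have h1 : ∀ i, ((3 : ℝ) / 4) ^ (2 + i - 2) = (3 / 4) ^ i := by
    intro i; congr 1; omega
  calc ∑ i ∈ Finset.range (n + 1 - 2), ((3 : ℝ) / 4) ^ (2 + i - 2)
      = ∑ i ∈ Finset.range (n + 1 - 2), ((3 : ℝ) / 4) ^ i :=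
        Finset.sum_congr rfl fun i _ => h1 i
    _ ≤ ∑' i : ℕ, ((3 : ℝ) / 4) ^ i := by
        apply Summable.sum_le_tsum _ (fun i _ => by positivity)
        exact summable_geometric_of_lt_one (by norm_num) (by norm_num)
    _ = (1 - 3 / 4)⁻¹ := tsum_geometric_of_lt_one (by norm_num) (by norm_num)
    _ = 4 := by norm_num

theorem aux_upper (n : ℕ) (hn : 64 ≤ n) :
    (∑ lam : n.Partition, (zpart lam : ℝ)) / (n.factorial : ℝ) ≤ 1 + 128 / n := by
  have hfpos : (0 : ℝ) < n.factorial := by exact_mod_cast n.factorial_pos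
  rw [div_le_iff₀ hfpos]
  have h1 : (∑ lam : n.Partition, (zpart lam : ℝ))
      = ((∑ lam : n.Partition, zpart lam : ℕ) : ℝ) := by push_cast; rfl
  rw [h1]
  have h2 := aux_sum_zpart_le n (by omega)
  have h3 : ((∑ lam : n.Partition, zpart lam : ℕ) : ℝ)
      ≤ (n.factorial : ℝ) + ∑ s ∈ Finset.Icc 2 n,
        ((2 ^ s * ((n - s).factorial * 2 ^ s * (s / 2).factorial) : ℕ) : ℝ) := by
    push_cast
    exact_mod_cast h2
  refine h3.trans ?_
  have h4 : ∑ s ∈ Finset.Icc 2 n,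
      ((2 ^ s * ((n - s).factorial * 2 ^ s * (s / 2).factorial) : ℕ) : ℝ)
      ≤ ∑ s ∈ Finset.Icc 2 n, 32 / (n : ℝ) * ((3:ℝ) / 4) ^ (s - 2) * (n.factorial : ℝ) := by
    refine Finset.sum_le_sum fun s hs => ?_
    have := Finset.mem_Icc.mp hs
    exact aux_term_bound n s hn this.1 this.2
  have h5 : ∑ s ∈ Finset.Icc 2 n, 32 / (n : ℝ) * (3 / 4) ^ (s - 2) * n.factorial
      ≤ 128 / n * n.factorial := by
    rw [show ∀ f : ℕ → ℝ, ∑ s ∈ Finset.Icc 2 n, 32 / (n : ℝ) * f s * n.factorial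
        = 32 / n * n.factorial * ∑ s ∈ Finset.Icc 2 n, f s from fun f => by
      rw [Finset.mul_sum]; exact Finset.sum_congr rfl fun s _ => by ring]
    have hnn : (0 : ℝ) ≤ 32 / n * n.factorial := by positivity
    calc 32 / (n : ℝ) * n.factorial * ∑ s ∈ Finset.Icc 2 n, ((3:ℝ)/4) ^ (s - 2)
        ≤ 32 / n * n.factorial * 4 := mul_le_mul_of_nonneg_left (aux_geom_bound n) hnn
      _ = 128 / n * n.factorial := by ring
  calc (n.factorial : ℝ) + ∑ s ∈ Finset.Icc 2 n,
        ((2 ^ s * ((n - s).factorial * 2 ^ s * (s / 2).factorial) : ℕ) : ℝ)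
      ≤ (n.factorial : ℝ) + 128 / n * n.factorial := by
        have := h4.trans h5
        linarith
    _ = (1 + 128 / n) * n.factorial := by ring

theorem aux_lower (n : ℕ) :
    1 ≤ (∑ lam : n.Partition, (zpart lam : ℝ)) / (n.factorial : ℝ) := by
  have hfpos : (0 : ℝ) < n.factorial := by exact_mod_cast n.factorial_pos
  rw [le_div_iff₀ hfpos, one_mul]
  have h1 : (n.factorial : ℝ) = (zpart (onesPart n) : ℝ) := by
    rw [aux_zpart_onesPart]
  rw [h1]
  exact Finset.single_le_sum (f := fun lam : n.Partition => (zpart lam : ℝ))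
    (fun _ _ => by positivity) (Finset.mem_univ _)

/-- `(∑_{λ ⊢ n} z_λ)/n! → 1` as `n → ∞`; in particular the sum
`∑_{λ ⊢ n} z_λ` is asymptotic to `n!`, dominated by the single term
`z_{(1^n)} = n!`. -/
theorem sum_z_asymptotic_factorial :
    Filter.Tendsto
      (fun n : ℕ => (∑ lam : n.Partition, (zpart lam : ℝ)) / (n.factorial : ℝ))
      Filter.atTop (nhds 1)
    ∧ ∀ n : ℕ, zpart (onesPart n) = n.factorial := by
  constructor
  · have hh : Filter.Tendsto (fun n : ℕ => 1 + 128 / (n : ℝ)) Filter.atTop (nhds 1) := by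
      have := tendsto_const_nhds (x := (1 : ℝ)) (f := Filter.atTop (α := ℕ))
        |>.add (tendsto_const_div_atTop_nhds_zero_nat 128)
      simpa using this
    refine tendsto_of_tendsto_of_tendsto_of_le_of_le' tendsto_const_nhds hh
      (Filter.Eventually.of_forall aux_lower) ?_
    filter_upwards [Filter.eventually_ge_atTop 64] with n hn
    exact aux_upper n hn
  · exact aux_zpart_onesPart

end TensorMatrix
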